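/- Let τ ≥ 1 be an integer, let V be a nonempty finite set with |V| = n, and let G_1, …, G_τ be simple graphs on V. Let F be the simple graph on V whose edge set is the union of the edge sets of G_1, …, G_τ, and let δ_F denote the minimum degree of F. If δ_F ≥ τ·(e − 1), then there exists a multi-layer dominating set D ⊆ V × {1,…,τ} with |D| ≤ (nτ/(τ + δ_F)) · (ln((τ + δ_F)/τ) + 1). -/

import Mathlib

open Finset

section Weights
variable {α : Type*} [DecidableEq α] (p : ℝ)

noncomputable def plWt (P S : Finset α) : ℝ := p ^ S.card * (1 - p) ^ (P \ S).card

lemma plWt_nonneg (h0 : 0 ≤ p) (h1 : p ≤ 1) (P S : Finset α) : 0 ≤ plWt p P S :=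
  mul_nonneg (pow_nonneg h0 _) (pow_nonneg (by linarith) _)

lemma sum_plWt (P : Finset α) : ∑ S ∈ P.powerset, plWt p P S = 1 := by
  have h := Finset.prod_add (fun _ : α => p) (fun _ : α => 1 - p) P
  simp only [prod_const] at h
  simp only [plWt, ← h]
  simp

lemma sum_plWt_disjoint (P C : Finset α) (hC : C ⊆ P) :
    ∑ S ∈ P.powerset.filter (fun S => Disjoint S C), plWt p P S = (1 - p) ^ C.card := by
  have hset : P.powerset.filter (fun S => Disjoint S C) = (P \ C).powerset := by
    ext S; simp [Finset.subset_sdiff]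
  rw [hset]
  have key : ∀ S ∈ (P \ C).powerset, plWt p P S = (1 - p) ^ C.card * plWt p (P \ C) S := by
    intro S hS
    rw [mem_powerset, Finset.subset_sdiff] at hS
    have hU : P \ S = ((P \ C) \ S) ∪ C := by
      ext x
      simp only [mem_sdiff, mem_union]
      constructor
      · intro ⟨hxP, hxS⟩
        by_cases hxC : x ∈ C
        · exact Or.inr hxC
        · exact Or.inl ⟨⟨hxP, hxC⟩, hxS⟩
      · rintro (⟨⟨hxP, _⟩, hxS⟩ | hxC)
        · exact ⟨hxP, hxS⟩
        · exact ⟨hC hxC, fun hxS => (Finset.disjoint_left.mp hS.2 hxS) hxC⟩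
    have hd : Disjoint ((P \ C) \ S) C :=
      Finset.disjoint_of_subset_left (Finset.sdiff_subset) sdiff_disjoint
    rw [plWt, plWt, hU, card_union_of_disjoint hd, pow_add]
    ring
  rw [Finset.sum_congr rfl key, ← Finset.mul_sum, sum_plWt, mul_one]

lemma sum_plWt_card (P : Finset α) :
    ∑ S ∈ P.powerset, plWt p P S * S.card = P.card * p := by
  have hcard : ∀ S ∈ P.powerset, (S.card : ℝ) = ∑ x ∈ P, if x ∈ S then (1:ℝ) else 0 := by
    intro S hS
    rw [mem_powerset] at hS
    rw [Finset.sum_ite_mem, Finset.inter_eq_right.mpr hS]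
    simp
  calc ∑ S ∈ P.powerset, plWt p P S * S.card
      = ∑ S ∈ P.powerset, ∑ x ∈ P, plWt p P S * (if x ∈ S then (1:ℝ) else 0) := by
        refine Finset.sum_congr rfl fun S hS => ?_
        rw [← Finset.mul_sum, ← hcard S hS]
    _ = ∑ x ∈ P, ∑ S ∈ P.powerset, plWt p P S * (if x ∈ S then (1:ℝ) else 0) :=
        Finset.sum_comm
    _ = ∑ x ∈ P, p := by
        refine Finset.sum_congr rfl fun x hx => ?_
        have h1 : (∑ S ∈ P.powerset, plWt p P S * (if x ∈ S then (1:ℝ) else 0))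
            = ∑ S ∈ P.powerset.filter (fun S => x ∈ S), plWt p P S := by
          rw [Finset.sum_filter]
          refine Finset.sum_congr rfl fun S _ => ?_
          by_cases h : x ∈ S <;> simp [h]
        have h2 : P.powerset.filter (fun S => x ∈ S)
            = P.powerset \ P.powerset.filter (fun S => Disjoint S ({x} : Finset α)) := by
          ext S
          simp [Finset.disjoint_singleton_right]
          tauto
        have h3 : P.powerset.filter (fun S => Disjoint S ({x} : Finset α)) ⊆ P.powerset :=
          Finset.filter_subset _ _
        rw [h1, h2, Finset.sum_sdiff_eq_sub h3, sum_plWt,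
          sum_plWt_disjoint p P {x} (Finset.singleton_subset_iff.mpr hx)]
        simp
    _ = P.card * p := by rw [Finset.sum_const, nsmul_eq_mul]

lemma exists_le_weighted (P : Finset α) (w g : Finset α → ℝ)
    (hw : ∀ S ∈ P.powerset, 0 ≤ w S) (hsum : ∑ S ∈ P.powerset, w S = 1) :
    ∃ S ∈ P.powerset, g S ≤ ∑ S ∈ P.powerset, w S * g S := by
  obtain ⟨S₀, hS₀, hmin⟩ := P.powerset.exists_min_image g ⟨∅, by simp⟩
  refine ⟨S₀, hS₀, ?_⟩
  calc g S₀ = ∑ S ∈ P.powerset, w S * g S₀ := by rw [← Finset.sum_mul, hsum, one_mul]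
    _ ≤ ∑ S ∈ P.powerset, w S * g S :=
        Finset.sum_le_sum fun S hS => mul_le_mul_of_nonneg_left (hmin S hS) (hw S hS)

end Weights

/-- For graphs `G 1, …, G τ` (τ ≥ 1) on a common nonempty finite vertex set
`V` of size `n`, letting `F = ⨆ i, G i` be the union (flattened) graph with minimum degree
`δ_F`, if `δ_F ≥ τ·(e − 1)` then there is a multi-layer dominating set `D ⊆ V × {1,…,τ}` with
`|D| ≤ (nτ/(τ+δ_F)) · (ln((τ+δ_F)/τ) + 1)`. -/
theorem exists_multilayer_dominatingSet_of_minDegree_flatten {V : Type*} [Fintype V] [Nonempty V]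
    (n : ℕ) (hn : Fintype.card V = n) (τ : ℕ) (hτ : 1 ≤ τ)
    (G : Fin τ → SimpleGraph V) [∀ i, DecidableRel (G i).Adj]
    [DecidableRel (⨆ i, G i).Adj]
    (δF : ℕ) (hδF : δF = (⨆ i, G i).minDegree)
    (hbig : (τ : ℝ) * (Real.exp 1 - 1) ≤ (δF : ℝ)) :
    ∃ D : Finset (V × Fin τ),
      (∀ v : V, (∃ i, (v, i) ∈ D) ∨ ∃ w i, (w, i) ∈ D ∧ (G i).Adj v w) ∧
      (D.card : ℝ) ≤
        ((n : ℝ) * τ) / ((τ : ℝ) + δF) * (Real.log (((τ : ℝ) + δF) / τ) + 1) := by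
  classical
  have hτR : (1:ℝ) ≤ (τ:ℝ) := by exact_mod_cast hτ
  have he : (2:ℝ) < Real.exp 1 := by
    have := Real.exp_one_gt_d9; nlinarith
  have hδpos : (0:ℝ) < (δF:ℝ) := lt_of_lt_of_le (by nlinarith) hbig
  set x : ℝ := ((τ:ℝ) + δF) / τ with hxdef
  have hτ0 : (0:ℝ) < τ := by linarith
  have htd : (0:ℝ) < (τ:ℝ) + δF := by linarith
  have hxpos : 0 < x := by positivity
  have hx1 : 1 < x := by rw [hxdef, lt_div_iff₀ hτ0]; linarith
  set p : ℝ := Real.log x / ((τ:ℝ) + δF) with hpdef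
  have hp0 : 0 < p := div_pos (Real.log_pos hx1) htd
  have hlogle : Real.log x ≤ (δF:ℝ) := by
    have h1 := Real.log_le_sub_one_of_pos hxpos
    have h2 : x - 1 = (δF:ℝ) / τ := by rw [hxdef]; field_simp; ring
    have h3 : (δF:ℝ) / τ ≤ (δF:ℝ) := div_le_self hδpos.le hτR
    linarith
  have hp1 : p < 1 := by rw [hpdef, div_lt_one htd]; linarith
  haveI : Nonempty (Fin τ) := ⟨⟨0, hτ⟩⟩
  -- the set of pairs covering a vertex v
  set C : V → Finset (V × Fin τ) :=
    fun v => univ.filter (fun y => y.1 = v ∨ (G y.2).Adj v y.1) with hCdef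
  have hCcard : ∀ v, τ + δF ≤ (C v).card := by
    intro v
    set f : V → Fin τ := fun w =>
      if h : (⨆ i, G i).Adj v w then (SimpleGraph.iSup_adj.mp h).choose else ⟨0, hτ⟩ with hfdef
    have hfadj : ∀ w, (⨆ i, G i).Adj v w → (G (f w)).Adj v w := by
      intro w h
      simp only [hfdef, dif_pos h]
      exact (SimpleGraph.iSup_adj.mp h).choose_spec
    set A : Finset (V × Fin τ) := univ.image (fun i : Fin τ => (v, i)) with hA
    set B : Finset (V × Fin τ) := (((⨆ i, G i).neighborFinset v)).image (fun w => (w, f w)) with hB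
    have hAcard : A.card = τ := by
      rw [hA, Finset.card_image_of_injective _
        (fun a b hab => ((Prod.mk.injEq _ _ _ _).mp hab).2)]
      simp
    have hBcard : B.card = (⨆ i, G i).degree v := by
      rw [hB, Finset.card_image_of_injective _
        (fun a b hab => ((Prod.mk.injEq _ _ _ _).mp hab).1)]
      rfl
    have hdisj : Disjoint A B := by
      rw [Finset.disjoint_left]
      rintro a ha hb
      simp only [hA, Finset.mem_image, Finset.mem_univ, true_and] at ha
      simp only [hB, Finset.mem_image, SimpleGraph.mem_neighborFinset] at hb
      obtain ⟨i, hi⟩ := ha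
      obtain ⟨w, hw, hwa⟩ := hb
      rw [← hwa] at hi
      exact hw.ne ((Prod.mk.injEq _ _ _ _).mp hi).1
    have hsub : A ∪ B ⊆ C v := by
      intro a ha
      rw [Finset.mem_union] at ha
      rw [hCdef, Finset.mem_filter]
      refine ⟨Finset.mem_univ _, ?_⟩
      rcases ha with ha | ha
      · simp only [hA, Finset.mem_image, Finset.mem_univ, true_and] at ha
        obtain ⟨i, hi⟩ := ha
        exact Or.inl ((Prod.mk.injEq _ _ _ _).mp hi.symm).1
      · simp only [hB, Finset.mem_image, SimpleGraph.mem_neighborFinset] at ha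
        obtain ⟨w, hw, hwa⟩ := ha
        rw [← hwa]
        exact Or.inr (hfadj w hw)
    have hδdeg : δF ≤ (⨆ i, G i).degree v := hδF ▸ SimpleGraph.minDegree_le_degree _ v
    calc τ + δF ≤ A.card + B.card := by rw [hAcard, hBcard]; omega
      _ = (A ∪ B).card := (Finset.card_union_of_disjoint hdisj).symm
      _ ≤ (C v).card := Finset.card_le_card hsub
  set P : Finset (V × Fin τ) := univ with hP
  have hPcard : (P.card : ℝ) = (n:ℝ) * τ := by
    rw [hP, Finset.card_univ, Fintype.card_prod, hn, Fintype.card_fin]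
    push_cast; ring
  set g : Finset (V × Fin τ) → ℝ :=
    fun S => (S.card : ℝ) + ((univ.filter (fun v => Disjoint S (C v))).card : ℝ) with hg
  have hE : ∑ S ∈ P.powerset, plWt p P S * g S
      = (P.card : ℝ) * p + ∑ v : V, (1 - p) ^ (C v).card := by
    simp only [hg, mul_add]
    rw [Finset.sum_add_distrib]
    congr 1
    · exact sum_plWt_card p P
    · calc ∑ S ∈ P.powerset, plWt p P S * ((univ.filter (fun v => Disjoint S (C v))).card : ℝ)
          = ∑ S ∈ P.powerset, ∑ v : V, plWt p P S * (if Disjoint S (C v) then (1:ℝ) else 0) := by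
            refine Finset.sum_congr rfl fun S _ => ?_
            rw [← Finset.mul_sum, Finset.sum_boole]
        _ = ∑ v : V, ∑ S ∈ P.powerset, plWt p P S * (if Disjoint S (C v) then (1:ℝ) else 0) :=
            Finset.sum_comm
        _ = ∑ v : V, (1 - p) ^ (C v).card := by
            refine Finset.sum_congr rfl fun v _ => ?_
            have h1 : (∑ S ∈ P.powerset, plWt p P S * (if Disjoint S (C v) then (1:ℝ) else 0))
                = ∑ S ∈ P.powerset.filter (fun S => Disjoint S (C v)), plWt p P S := by
              rw [Finset.sum_filter]
              refine Finset.sum_congr rfl fun S _ => ?_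
              by_cases h : Disjoint S (C v) <;> simp [h]
            rw [h1, sum_plWt_disjoint p P (C v) (Finset.subset_univ _)]
  have hEbound : ∑ S ∈ P.powerset, plWt p P S * g S
      ≤ (n:ℝ) * τ * p + (n:ℝ) * (1 - p) ^ (τ + δF) := by
    rw [hE, hPcard]
    have : ∑ v : V, (1 - p) ^ (C v).card ≤ ∑ _v : V, (1 - p) ^ (τ + δF) :=
      Finset.sum_le_sum fun v _ =>
        pow_le_pow_of_le_one (by linarith) (by linarith) (hCcard v)
    rw [Finset.sum_const, Finset.card_univ, hn, nsmul_eq_mul] at this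
    linarith
  obtain ⟨S₀, _, hS₀le⟩ := exists_le_weighted P (plWt p P) g
    (fun S _ => plWt_nonneg p hp0.le hp1.le P S) (sum_plWt p P)
  set U : Finset V := univ.filter (fun v => Disjoint S₀ (C v)) with hU
  refine ⟨S₀ ∪ U.image (fun v => (v, (⟨0, hτ⟩ : Fin τ))), ?_, ?_⟩
  · intro v
    by_cases hv : Disjoint S₀ (C v)
    · exact Or.inl ⟨⟨0, hτ⟩, Finset.mem_union_right _
        (Finset.mem_image_of_mem _ (Finset.mem_filter.mpr ⟨Finset.mem_univ v, hv⟩))⟩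
    · rw [Finset.not_disjoint_iff] at hv
      obtain ⟨a, haS, haC⟩ := hv
      rw [hCdef, Finset.mem_filter] at haC
      rcases haC.2 with h1 | h2
      · refine Or.inl ⟨a.2, Finset.mem_union_left _ ?_⟩
        have : (v, a.2) = a := by rw [← h1]
        rwa [this]
      · exact Or.inr ⟨a.1, a.2, Finset.mem_union_left _ haS, h2⟩
  · have hcard : ((S₀ ∪ U.image (fun v => (v, (⟨0, hτ⟩ : Fin τ)))).card : ℝ) ≤ g S₀ := by
      have h1 := Finset.card_union_le S₀ (U.image (fun v => (v, (⟨0, hτ⟩ : Fin τ))))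
      have h2 := Finset.card_image_le (s := U) (f := fun v => (v, (⟨0, hτ⟩ : Fin τ)))
      have : (S₀ ∪ U.image (fun v => (v, (⟨0, hτ⟩ : Fin τ)))).card ≤ S₀.card + U.card := by omega
      have h3 : g S₀ = ((S₀.card : ℝ)) + ((U.card : ℝ)) := rfl
      rw [h3]
      exact_mod_cast this
    have hfinal : (n:ℝ) * τ * p + (n:ℝ) * (1 - p) ^ (τ + δF)
        ≤ ((n : ℝ) * τ) / ((τ : ℝ) + δF) * (Real.log x + 1) := by
      have hn0 : (0:ℝ) ≤ (n:ℝ) := Nat.cast_nonneg n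
      have hpow : (1 - p) ^ (τ + δF) ≤ (τ:ℝ) / ((τ:ℝ) + δF) := by
        have h1 : (1 - p) ^ (τ + δF) ≤ Real.exp (-p) ^ (τ + δF) :=
          pow_le_pow_left₀ (by linarith) (by linarith [Real.add_one_le_exp (-p)]) _
        have h2 : Real.exp (-p) ^ (τ + δF) = Real.exp (((τ + δF : ℕ) : ℝ) * (-p)) :=
          (Real.exp_nat_mul _ _).symm
        have h3 : ((τ + δF : ℕ) : ℝ) * (-p) = -Real.log x := by
          rw [hpdef]; push_cast; field_simp
        rw [h2, h3, Real.exp_neg, Real.exp_log hxpos, hxdef, inv_div] at h1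
        exact h1
      have hptp : (n:ℝ) * τ * p = ((n : ℝ) * τ) / ((τ : ℝ) + δF) * Real.log x := by
        rw [hpdef]; field_simp
      have h4 : (n:ℝ) * (1 - p) ^ (τ + δF) ≤ (n:ℝ) * ((τ:ℝ) / ((τ:ℝ) + δF)) :=
        mul_le_mul_of_nonneg_left hpow hn0
      have h5 : (n:ℝ) * ((τ:ℝ) / ((τ:ℝ) + δF)) = ((n : ℝ) * τ) / ((τ : ℝ) + δF) := by
        field_simp
      rw [mul_add, mul_one, hptp]
      linarith
    calc ((S₀ ∪ U.image (fun v => (v, (⟨0, hτ⟩ : Fin τ)))).card : ℝ)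
        ≤ g S₀ := hcard
      _ ≤ ∑ S ∈ P.powerset, plWt p P S * g S := hS₀le
      _ ≤ (n:ℝ) * τ * p + (n:ℝ) * (1 - p) ^ (τ + δF) := hEbound
      _ ≤ ((n : ℝ) * τ) / ((τ : ℝ) + δF) * (Real.log x + 1) := hfinal
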